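/- Let X be a real Banach space and α, β > 0. Then min{α,β}·μ(X) ≤ DW_B(X,α,β) ≤ 2·max{α,β}·μ(X), where μ(X) is the rectangular constant. -/
import Mathlib


def BirkhoffOrth {X : Type*} [NormedAddCommGroup X] [NormedSpace ℝ X] (x y : X) : Prop :=
  ∀ t : ℝ, ‖x‖ ≤ ‖x + t • y‖

noncomputable def DWB (X : Type*) [NormedAddCommGroup X] [NormedSpace ℝ X] (α β : ℝ) : ℝ :=
  sSup { r : ℝ | ∃ x y : X, x ≠ 0 ∧ y ≠ 0 ∧ BirkhoffOrth x y ∧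
    r = (α * ‖x‖ + β * ‖y‖) / ‖x - y‖ * ‖‖x‖⁻¹ • x - ‖y‖⁻¹ • y‖ }

noncomputable def rectConstant (X : Type*) [NormedAddCommGroup X] [NormedSpace ℝ X] : ℝ :=
  sSup { r : ℝ | ∃ x y : X, x ≠ 0 ∧ y ≠ 0 ∧ BirkhoffOrth x y ∧
    r = (‖x‖ + ‖y‖) / ‖x + y‖ }

section Aux

variable {X : Type*} [NormedAddCommGroup X] [NormedSpace ℝ X]

lemma orth_neg {x y : X} (h : BirkhoffOrth x y) : BirkhoffOrth x (-y) := by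
  intro t
  simpa [smul_neg, neg_smul] using h (-t)

lemma orth_sub {x y : X} (h : BirkhoffOrth x y) : ‖x‖ ≤ ‖x - y‖ := by
  simpa [sub_eq_add_neg] using h (-1)

lemma orth_add {x y : X} (h : BirkhoffOrth x y) : ‖x‖ ≤ ‖x + y‖ := by
  simpa using h 1

lemma orth_unit_add {x y : X} (hx : x ≠ 0) (hy : y ≠ 0) (h : BirkhoffOrth x y) :
    1 ≤ ‖‖x‖⁻¹ • x + ‖y‖⁻¹ • y‖ := by
  have hx' : (0:ℝ) < ‖x‖ := norm_pos_iff.mpr hx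
  have hy' : (0:ℝ) < ‖y‖ := norm_pos_iff.mpr hy
  have h1 := h (‖x‖ / ‖y‖)
  have heq : ‖x‖⁻¹ • x + ‖y‖⁻¹ • y = ‖x‖⁻¹ • (x + (‖x‖/‖y‖) • y) := by
    rw [smul_add, smul_smul]
    congr 2
    field_simp
  rw [heq, norm_smul, Real.norm_eq_abs, abs_of_pos (inv_pos.mpr hx')]
  calc (1:ℝ) = ‖x‖⁻¹ * ‖x‖ := by field_simp
  _ ≤ ‖x‖⁻¹ * ‖x + (‖x‖/‖y‖) • y‖ :=
      mul_le_mul_of_nonneg_left h1 (inv_pos.mpr hx').le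

lemma S1_bdd : BddAbove { r : ℝ | ∃ x y : X, x ≠ 0 ∧ y ≠ 0 ∧ BirkhoffOrth x y ∧
    r = (‖x‖ + ‖y‖) / ‖x + y‖ } := by
  refine ⟨3, ?_⟩
  rintro r ⟨x, y, hx, hy, h, rfl⟩
  have hx' : (0:ℝ) < ‖x‖ := norm_pos_iff.mpr hx
  have h1 : ‖x‖ ≤ ‖x + y‖ := orth_add h
  have hd : 0 < ‖x + y‖ := lt_of_lt_of_le hx' h1
  have h2 : ‖y‖ ≤ ‖x + y‖ + ‖x‖ := by
    have := norm_sub_le (x + y) x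
    simpa using this
  rw [div_le_iff₀ hd]
  linarith

lemma S2_bdd (α β : ℝ) (hα : 0 < α) (hβ : 0 < β) :
    BddAbove { r : ℝ | ∃ x y : X, x ≠ 0 ∧ y ≠ 0 ∧ BirkhoffOrth x y ∧
      r = (α * ‖x‖ + β * ‖y‖) / ‖x - y‖ * ‖‖x‖⁻¹ • x - ‖y‖⁻¹ • y‖ } := by
  refine ⟨2 * (α + 2 * β), ?_⟩
  rintro r ⟨x, y, hx, hy, h, rfl⟩
  have hx' : (0:ℝ) < ‖x‖ := norm_pos_iff.mpr hx
  have h1 : ‖x‖ ≤ ‖x - y‖ := orth_sub h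
  have hd : 0 < ‖x - y‖ := lt_of_lt_of_le hx' h1
  have h2 : ‖y‖ ≤ ‖x - y‖ + ‖x‖ := by
    have := norm_sub_le (x - y) x
    simpa [norm_sub_rev] using this
  have hq : (α * ‖x‖ + β * ‖y‖) / ‖x - y‖ ≤ α + 2 * β := by
    rw [div_le_iff₀ hd]
    nlinarith
  have hy' : (0:ℝ) < ‖y‖ := norm_pos_iff.mpr hy
  have he : ‖‖x‖⁻¹ • x - ‖y‖⁻¹ • y‖ ≤ 2 := by
    have := norm_sub_le (‖x‖⁻¹ • x) (‖y‖⁻¹ • y)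
    rw [norm_smul, norm_smul, Real.norm_eq_abs, Real.norm_eq_abs,
      abs_of_pos (inv_pos.mpr hx'), abs_of_pos (inv_pos.mpr hy'),
      inv_mul_cancel₀ hx'.ne', inv_mul_cancel₀ hy'.ne'] at this
    linarith
  calc (α * ‖x‖ + β * ‖y‖) / ‖x - y‖ * ‖‖x‖⁻¹ • x - ‖y‖⁻¹ • y‖
      ≤ (α + 2 * β) * 2 := mul_le_mul hq he (norm_nonneg _) (by positivity)
  _ = 2 * (α + 2 * β) := by ring

end Aux

theorem DWB_rect_bounds (X : Type*) [NormedAddCommGroup X] [NormedSpace ℝ X] [CompleteSpace X]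
    (α β : ℝ) (hα : 0 < α) (hβ : 0 < β) :
    min α β * rectConstant X ≤ DWB X α β ∧ DWB X α β ≤ 2 * max α β * rectConstant X := by
  set S1 : Set ℝ := { r : ℝ | ∃ x y : X, x ≠ 0 ∧ y ≠ 0 ∧ BirkhoffOrth x y ∧
    r = (‖x‖ + ‖y‖) / ‖x + y‖ } with hS1
  set S2 : Set ℝ := { r : ℝ | ∃ x y : X, x ≠ 0 ∧ y ≠ 0 ∧ BirkhoffOrth x y ∧
    r = (α * ‖x‖ + β * ‖y‖) / ‖x - y‖ * ‖‖x‖⁻¹ • x - ‖y‖⁻¹ • y‖ } with hS2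
  have hrect : rectConstant X = sSup S1 := rfl
  have hdw : DWB X α β = sSup S2 := rfl
  have hmin : 0 < min α β := lt_min hα hβ
  have hmax : 0 < max α β := lt_of_lt_of_le hα (le_max_left α β)
  by_cases hne : ∃ x y : X, x ≠ 0 ∧ y ≠ 0 ∧ BirkhoffOrth x y
  · obtain ⟨x0, y0, hx0, hy0, h0⟩ := hne
    have hb1 : BddAbove S1 := S1_bdd
    have hb2 : BddAbove S2 := S2_bdd α β hα hβ
    -- nonnegativity of the sups
    have hS1nn : 0 ≤ sSup S1 := by
      have hmem : (‖x0‖ + ‖y0‖) / ‖x0 + y0‖ ∈ S1 := ⟨x0, y0, hx0, hy0, h0, rfl⟩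
      have : (0:ℝ) ≤ (‖x0‖ + ‖y0‖) / ‖x0 + y0‖ := by positivity
      exact le_trans this (le_csSup hb1 hmem)
    have hS2nn : 0 ≤ sSup S2 := by
      have hmem : (α * ‖x0‖ + β * ‖y0‖) / ‖x0 - y0‖ *
          ‖‖x0‖⁻¹ • x0 - ‖y0‖⁻¹ • y0‖ ∈ S2 := ⟨x0, y0, hx0, hy0, h0, rfl⟩
      have h1 : ‖x0‖ ≤ ‖x0 - y0‖ := orth_sub h0
      have hx0' : (0:ℝ) < ‖x0‖ := norm_pos_iff.mpr hx0
      have : (0:ℝ) ≤ (α * ‖x0‖ + β * ‖y0‖) / ‖x0 - y0‖ *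
          ‖‖x0‖⁻¹ • x0 - ‖y0‖⁻¹ • y0‖ := by positivity
      exact le_trans this (le_csSup hb2 hmem)
    constructor
    · -- lower bound
      rw [hrect, hdw]
      rw [← le_div_iff₀' hmin]
      apply Real.sSup_le
      · rintro m ⟨x, y, hx, hy, h, rfl⟩
        rw [le_div_iff₀' hmin]
        have hx' : (0:ℝ) < ‖x‖ := norm_pos_iff.mpr hx
        have hy' : (0:ℝ) < ‖y‖ := norm_pos_iff.mpr hy
        have hd : 0 < ‖x + y‖ := lt_of_lt_of_le hx' (orth_add h)
        -- the corresponding element of S2 via (x, -y)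
        have hmem : (α * ‖x‖ + β * ‖-y‖) / ‖x - -y‖ *
            ‖‖x‖⁻¹ • x - ‖-y‖⁻¹ • (-y)‖ ∈ S2 :=
          ⟨x, -y, hx, neg_ne_zero.mpr hy, orth_neg h, rfl⟩
        have hsimp : (α * ‖x‖ + β * ‖-y‖) / ‖x - -y‖ * ‖‖x‖⁻¹ • x - ‖-y‖⁻¹ • (-y)‖
            = (α * ‖x‖ + β * ‖y‖) / ‖x + y‖ * ‖‖x‖⁻¹ • x + ‖y‖⁻¹ • y‖ := by
          rw [norm_neg, sub_neg_eq_add, smul_neg, sub_neg_eq_add]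
        rw [hsimp] at hmem
        have hle := le_csSup hb2 hmem
        refine le_trans ?_ hle
        have hunit : 1 ≤ ‖‖x‖⁻¹ • x + ‖y‖⁻¹ • y‖ := orth_unit_add hx hy h
        have hnum : min α β * (‖x‖ + ‖y‖) ≤ α * ‖x‖ + β * ‖y‖ := by
          have h1 : min α β ≤ α := min_le_left α β
          have h2 : min α β ≤ β := min_le_right α β
          nlinarith
        calc min α β * ((‖x‖ + ‖y‖) / ‖x + y‖)
            = min α β * (‖x‖ + ‖y‖) / ‖x + y‖ := by ring
        _ ≤ (α * ‖x‖ + β * ‖y‖) / ‖x + y‖ := by gcongr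
        _ = (α * ‖x‖ + β * ‖y‖) / ‖x + y‖ * 1 := by ring
        _ ≤ (α * ‖x‖ + β * ‖y‖) / ‖x + y‖ * ‖‖x‖⁻¹ • x + ‖y‖⁻¹ • y‖ := by
            apply mul_le_mul_of_nonneg_left hunit (by positivity)
      · positivity
    · -- upper bound
      rw [hrect, hdw]
      apply Real.sSup_le
      · rintro r ⟨x, y, hx, hy, h, rfl⟩
        have hx' : (0:ℝ) < ‖x‖ := norm_pos_iff.mpr hx
        have hy' : (0:ℝ) < ‖y‖ := norm_pos_iff.mpr hy
        have hd : 0 < ‖x - y‖ := lt_of_lt_of_le hx' (orth_sub h)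
        have hmem : (‖x‖ + ‖-y‖) / ‖x + -y‖ ∈ S1 :=
          ⟨x, -y, hx, neg_ne_zero.mpr hy, orth_neg h, rfl⟩
        have hsimp : (‖x‖ + ‖-y‖) / ‖x + -y‖ = (‖x‖ + ‖y‖) / ‖x - y‖ := by
          rw [norm_neg, ← sub_eq_add_neg]
        rw [hsimp] at hmem
        have hle := le_csSup hb1 hmem
        have he : ‖‖x‖⁻¹ • x - ‖y‖⁻¹ • y‖ ≤ 2 := by
          have := norm_sub_le (‖x‖⁻¹ • x) (‖y‖⁻¹ • y)
          rw [norm_smul, norm_smul, Real.norm_eq_abs, Real.norm_eq_abs,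
            abs_of_pos (inv_pos.mpr hx'), abs_of_pos (inv_pos.mpr hy'),
            inv_mul_cancel₀ hx'.ne', inv_mul_cancel₀ hy'.ne'] at this
          linarith
        have hnum : α * ‖x‖ + β * ‖y‖ ≤ max α β * (‖x‖ + ‖y‖) := by
          have h1 : α ≤ max α β := le_max_left α β
          have h2 : β ≤ max α β := le_max_right α β
          nlinarith
        calc (α * ‖x‖ + β * ‖y‖) / ‖x - y‖ * ‖‖x‖⁻¹ • x - ‖y‖⁻¹ • y‖
            ≤ max α β * (‖x‖ + ‖y‖) / ‖x - y‖ * 2 := by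
              apply mul_le_mul (by gcongr) he (norm_nonneg _) (by positivity)
        _ = 2 * max α β * ((‖x‖ + ‖y‖) / ‖x - y‖) := by ring
        _ ≤ 2 * max α β * sSup S1 := by
              apply mul_le_mul_of_nonneg_left hle (by positivity)
      · positivity
  · -- both sets are empty
    have e1 : S1 = ∅ := by
      ext r
      simp only [hS1, Set.mem_setOf_eq, Set.mem_empty_iff_false, iff_false]
      rintro ⟨x, y, hx, hy, h, -⟩
      exact hne ⟨x, y, hx, hy, h⟩
    have e2 : S2 = ∅ := by
      ext r
      simp only [hS2, Set.mem_setOf_eq, Set.mem_empty_iff_false, iff_false]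
      rintro ⟨x, y, hx, hy, h, -⟩
      exact hne ⟨x, y, hx, hy, h⟩
    rw [hrect, hdw, e1, e2, Real.sSup_empty]
    simp
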